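/- For X_n = Σ_{i=1}^{n} exp(σ W_{t_i} + (m − σ²/2) t_i) with fixed n ∈ ℕ: lim_{ε→0} log P(X_n ≤ ε) / (log ε)² = −1/(2σ²τ). -/

import Mathlib

open scoped NNReal
open MeasureTheory ProbabilityTheory Real

open Set Filter in
lemma gauss_Iic_toReal (v : ℝ≥0) (hv : v ≠ 0) (a : ℝ) :
    ((gaussianReal 0 v) (Iic a)).toReal = ∫ x in Iic a, gaussianPDFReal 0 v x := by
  rw [gaussianReal_apply_eq_integral 0 hv, ENNReal.toReal_ofReal]
  exact integral_nonneg fun x => gaussianPDFReal_nonneg _ _ _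


open Set Filter in
lemma gauss_lower {v : ℝ≥0} (hv : 0 < v) {a : ℝ} (ha : a ≤ 0) :
    (√(2 * π * v))⁻¹ * Real.exp (-(a-1)^2 / (2 * v)) ≤ ((gaussianReal 0 v) (Iic a)).toReal := by
  have hV : (0:ℝ) < v := hv
  rw [gauss_Iic_toReal v hv.ne' a]
  have h1 : (√(2 * π * v))⁻¹ * Real.exp (-(a-1)^2 / (2 * v))
      ≤ ∫ x in Ioc (a-1) a, gaussianPDFReal 0 v x := by
    have hconst : ∫ x in Ioc (a-1) a, (√(2 * π * (v:ℝ)))⁻¹ * Real.exp (-(a-1)^2 / (2 * v))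
        = (√(2 * π * (v:ℝ)))⁻¹ * Real.exp (-(a-1)^2 / (2 * v)) := by
      rw [setIntegral_const]
      simp only [Measure.real, Real.volume_Ioc]
      norm_num
    rw [← hconst]
    refine setIntegral_mono_on ?_ ?_ measurableSet_Ioc ?_
    · exact integrableOn_const (by rw [Real.volume_Ioc]; exact ENNReal.ofReal_ne_top)
    · exact (integrable_gaussianPDFReal 0 v).integrableOn
    · intro x hx
      unfold gaussianPDFReal
      simp only [sub_zero]
      refine mul_le_mul_of_nonneg_left ?_ (by positivity)
      rw [Real.exp_le_exp]
      have h1 := hx.1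
      have h2 := hx.2
      have hkey : -(a-1)^2 ≤ -x^2 := by nlinarith
      have h2v : (0:ℝ) < 2 * v := by positivity
      gcongr
  refine h1.trans ?_
  refine setIntegral_mono_set ((integrable_gaussianPDFReal 0 v).integrableOn) ?_ ?_
  · exact ae_of_all _ fun x => gaussianPDFReal_nonneg _ _ _
  · exact ae_of_all _ (fun x hx => hx.2)


open Set Filter in
lemma gauss_upper {v : ℝ≥0} (hv : 0 < v) {a : ℝ} (ha : a < 0) :
    ((gaussianReal 0 v) (Iic a)).toReal ≤
      (√(2 * π * v))⁻¹ * ((v : ℝ) / (-a)) * Real.exp (-a^2 / (2 * v)) := by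
  have hV : (0:ℝ) < v := hv
  set b : ℝ := -a / v with hbdef
  have hb : 0 < b := div_pos (neg_pos.2 ha) hV
  rw [gauss_Iic_toReal v hv.ne' a]
  have hflip : ∫ x in Iic a, gaussianPDFReal 0 v x
      = ∫ x in Ioi (-a), gaussianPDFReal 0 v (-x) := by
    rw [integral_comp_neg_Ioi, neg_neg]
  rw [hflip]
  set K : ℝ := (√(2 * π * (v:ℝ)))⁻¹ * Real.exp (a^2 / (2 * v)) with hK
  have hmono : ∫ x in Ioi (-a), gaussianPDFReal 0 v (-x)
      ≤ ∫ x in Ioi (-a), K * Real.exp (-b * x) := by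
    refine setIntegral_mono_on ?_ ?_ measurableSet_Ioi ?_
    · exact ((integrable_gaussianPDFReal 0 v).comp_neg).integrableOn
    · exact ((exp_neg_integrableOn_Ioi (-a) hb).const_mul K)
    · intro x hx
      have hx' : -a < x := hx
      unfold gaussianPDFReal
      rw [hK, mul_assoc ((√(2 * π * (v:ℝ)))⁻¹) (Real.exp (a^2 / (2 * (v:ℝ))))
        (Real.exp (-b * x)), ← Real.exp_add]
      refine mul_le_mul_of_nonneg_left ?_ (by positivity)
      rw [Real.exp_le_exp]
      have hxsq : -(-x - 0:ℝ)^2/(2*(v:ℝ)) = -x^2/(2*(v:ℝ)) := by ring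
      rw [hxsq]
      have hq : a^2 / (2*(v:ℝ)) + -b*x - (-x^2 / (2*(v:ℝ))) = (x + a)^2 / (2*(v:ℝ)) := by
        rw [hbdef]; field_simp; ring
      nlinarith [div_nonneg (sq_nonneg (x+a)) (by positivity : (0:ℝ) ≤ 2*(v:ℝ))]
  refine hmono.trans ?_
  rw [integral_const_mul]
  have hint : ∫ x in Ioi (-a), Real.exp (-b * x) = b⁻¹ * Real.exp (-b * -a) := by
    have h := integral_comp_mul_left_Ioi (fun y => Real.exp (-y)) (-a) hb
    simp only [smul_eq_mul, abs_of_pos (inv_pos.2 hb)] at h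
    have h2 : ∫ x in Ioi (b * -a), Real.exp (-x) = Real.exp (-(b * -a)) :=
      integral_exp_neg_Ioi _
    calc ∫ x in Ioi (-a), Real.exp (-b * x)
        = ∫ x in Ioi (-a), (fun y => Real.exp (-y)) (b * x) := by
          congr 1; ext x; rw [neg_mul]
      _ = b⁻¹ * ∫ x in Ioi (b * -a), Real.exp (-x) := h
      _ = b⁻¹ * Real.exp (-(b * -a)) := by rw [h2]
      _ = b⁻¹ * Real.exp (-b * -a) := by ring_nf
  rw [hint]
  have hbinv : b⁻¹ = (v:ℝ) / (-a) := by
    rw [hbdef, inv_div]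
  rw [hK, hbinv]
  have hee : Real.exp (a^2/(2*(v:ℝ))) * Real.exp (-b * -a) = Real.exp (-a^2/(2*(v:ℝ))) := by
    rw [← Real.exp_add]; congr 1; rw [hbdef]; field_simp; ring
  calc (√(2*π*(v:ℝ)))⁻¹ * Real.exp (a^2/(2*(v:ℝ))) * ((v:ℝ)/(-a) * Real.exp (-b * -a))
      = (√(2*π*(v:ℝ)))⁻¹ * ((v:ℝ)/(-a)) * (Real.exp (a^2/(2*(v:ℝ))) * Real.exp (-b * -a)) := by
        ring
    _ = (√(2*π*(v:ℝ)))⁻¹ * ((v:ℝ)/(-a)) * Real.exp (-a^2/(2*(v:ℝ))) := by rw [hee]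
    _ ≤ (√(2*π*(v:ℝ)))⁻¹ * ((v:ℝ)/(-a)) * Real.exp (-a^2/(2*(v:ℝ))) := le_refl _


open Set Filter in
lemma tendsto_inv_atBot_zero'' : Tendsto (fun x : ℝ => x⁻¹) atBot (nhds 0) := by
  have h1 : Tendsto (fun x : ℝ => -x) atBot atTop := tendsto_neg_atBot_atTop
  have h2 : Tendsto (fun x : ℝ => (-x)⁻¹) atBot (nhds 0) := tendsto_inv_atTop_zero.comp h1
  have h3 := h2.neg
  rw [neg_zero] at h3
  refine h3.congr fun x => ?_
  rw [inv_neg, neg_neg]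


open Set Filter in
lemma tendsto_aux (c k K : ℝ) :
    Tendsto (fun x : ℝ => (K - (x + k)^2 * c) / x^2) atBot (nhds (-c)) := by
  have hg : Continuous (fun y : ℝ => K * y^2 - c * (1 + k*y)^2) := by continuity
  have h0 : (fun y : ℝ => K * y^2 - c * (1 + k*y)^2) 0 = -c := by norm_num
  have hcomp : Tendsto (fun x : ℝ => K * (x⁻¹)^2 - c * (1 + k*x⁻¹)^2) atBot (nhds (-c)) := by
    rw [← h0]
    exact (hg.tendsto 0).comp tendsto_inv_atBot_zero''
  refine hcomp.congr' ?_
  filter_upwards [eventually_lt_atBot (0:ℝ)] with x hx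
  have hx0 : x ≠ 0 := ne_of_lt hx
  field_simp


/-- A standard Brownian motion on a probability space: starts at `0`, has
continuous paths, Gaussian increments `W_t - W_s ~ N(0, t-s)`, and independent
increments over disjoint ordered time intervals. -/
def IsStdBrownianMotion {Ω : Type*} [MeasureSpace Ω] (W : ℝ → Ω → ℝ) : Prop :=
  (∀ ω, W 0 ω = 0) ∧
  (∀ ω, Continuous fun t => W t ω) ∧
  (∀ t, Measurable (W t)) ∧
  (∀ s t : ℝ, 0 ≤ s → s ≤ t →
    Measure.map (fun ω => W t ω - W s ω) ℙ
      = gaussianReal 0 (Real.toNNReal (t - s))) ∧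
  (∀ n : ℕ, ∀ t : ℕ → ℝ, Monotone t → 0 ≤ t 0 →
    iIndepFun
      (fun i : Fin n => fun ω => W (t (i + 1)) ω - W (t i) ω) ℙ)



open Set Filter in
set_option maxHeartbeats 1600000 in
/-- Left-tail asymptotics of the finite sum
`X_n = ∑_{i=1}^{n} exp(σ W_{t_i} + (m-σ²/2)t_i)`:
`lim_{ε→0⁺} log P(X_n ≤ ε) / (log ε)² = -1/(2σ²τ)`. -/
theorem stmt19 {Ω : Type*} [MeasureSpace Ω] [IsProbabilityMeasure (ℙ : Measure Ω)]
    (W : ℝ → Ω → ℝ) (hW : IsStdBrownianMotion W)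
    (σ τ m : ℝ) (hσ : 0 < σ) (hτ : 0 < τ) (hm : m < σ ^ 2 / 2)
    (n : ℕ) (hn : 1 ≤ n) :
    Filter.Tendsto
      (fun ε : ℝ =>
        Real.log (ℙ {ω | ∑ i ∈ Finset.range n,
          Real.exp (σ * W (((i : ℝ) + 1) * τ) ω
            + (m - σ ^ 2 / 2) * (((i : ℝ) + 1) * τ)) ≤ ε}).toReal / (Real.log ε) ^ 2)
      (nhdsWithin 0 (Set.Ioi 0)) (nhds (-1 / (2 * σ ^ 2 * τ))) := by
  obtain ⟨hW0, hWcont, hWmeas, hWgauss, hWind⟩ := hW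
  obtain ⟨q, rfl⟩ : ∃ q, n = q + 1 := ⟨n - 1, (Nat.succ_pred_eq_of_pos hn).symm⟩
  set δ : ℝ := m - σ ^ 2 / 2 with hδdef
  have hδ : δ < 0 := sub_neg.mpr hm
  set V : ℝ≥0 := τ.toNNReal with hVdef
  have hVpos : 0 < V := Real.toNNReal_pos.mpr hτ
  have hVc : ((V : ℝ≥0) : ℝ) = τ := Real.coe_toNNReal τ hτ.le
  set t : ℕ → ℝ := fun k => (k : ℝ) * τ with htdef
  have htmono : Monotone t := fun i j hij =>
    mul_le_mul_of_nonneg_right (Nat.cast_le.2 hij) hτ.le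
  have ht0 : t 0 = 0 := by simp [htdef]
  set inc : ℕ → Ω → ℝ := fun i ω => W (t (i+1)) ω - W (t i) ω with hincdef
  have hincmeas : ∀ i, Measurable (inc i) := fun i => (hWmeas _).sub (hWmeas _)
  have hmap : ∀ i : ℕ, Measure.map (inc i) ℙ = gaussianReal 0 V := by
    intro i
    have hle : t i ≤ t (i+1) := htmono (Nat.le_succ i)
    have h0i : 0 ≤ t i := by
      simp only [htdef]; positivity
    have h := hWgauss (t i) (t (i+1)) h0i hle
    rw [hincdef]
    rw [h]
    congr 1
    rw [hVdef]
    congr 1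
    simp only [htdef]
    push_cast
    ring
  have hprob : ∀ (i : ℕ) (x : ℝ), ℙ (inc i ⁻¹' Iic x) = gaussianReal 0 V (Iic x) := by
    intro i x
    rw [← Measure.map_apply (hincmeas i) measurableSet_Iic, hmap i]
  have hInd := hWind (q+1) t htmono (le_of_eq ht0.symm)
  set N : ℝ := (q : ℝ) + 1 with hNdef
  have hN1 : (1:ℝ) ≤ N := by
    have : (0:ℝ) ≤ (q:ℝ) := Nat.cast_nonneg q
    simp only [hNdef]; linarith
  have hN0 : (0:ℝ) < N := by positivity
  set C : ℝ := (√(2 * π * τ))⁻¹ with hC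
  have hCpos : 0 < C := by positivity
  set L0 : ℝ := C * Real.exp (-(0-1)^2/(2*τ)) with hL0
  have hL0pos : 0 < L0 := by positivity
  set K₁ : ℝ := C * L0 ^ q with hK₁
  have hK₁pos : 0 < K₁ := by positivity
  set K₂ : ℝ := C * τ with hK₂
  have hK₂pos : 0 < K₂ := by positivity
  -- lower bound on the probability
  have hlow : ∀ ε : ℝ, 0 < ε → (Real.log ε - Real.log N)/σ ≤ 0 →
      K₁ * Real.exp (-(((Real.log ε - Real.log N)/σ) - 1)^2 / (2*τ))
        ≤ (ℙ {ω | ∑ i ∈ Finset.range (q+1),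
          Real.exp (σ * W (((i : ℝ) + 1) * τ) ω
            + δ * (((i : ℝ) + 1) * τ)) ≤ ε}).toReal := by
    intro ε hε hb
    set b : ℝ := (Real.log ε - Real.log N)/σ with hbdef
    set c : Fin (q+1) → ℝ := fun i => if (i : ℕ) = 0 then b else 0 with hcdef
    set E : Set Ω := ⋂ i : Fin (q+1), (fun ω => W (t (i+1)) ω - W (t i) ω) ⁻¹' Iic (c i)
      with hEdef
    have hEsub : E ⊆ {ω | ∑ i ∈ Finset.range (q+1),
        Real.exp (σ * W (((i : ℝ) + 1) * τ) ω + δ * (((i : ℝ) + 1) * τ)) ≤ ε} := by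
      intro ω hω
      simp only [hEdef, Set.mem_iInter, Set.mem_preimage, Set.mem_Iic] at hω
      have hWsum : ∀ j : ℕ, j < q+1 → W (t (j+1)) ω ≤ b := by
        intro j hj
        have htel : ∑ i ∈ Finset.range (j+1), inc i ω = W (t (j+1)) ω := by
          rw [hincdef]
          rw [Finset.sum_range_sub (fun i => W (t i) ω)]
          rw [ht0, hW0 ω, sub_zero]
        have hsumle : ∑ i ∈ Finset.range (j+1), inc i ω
            ≤ ∑ i ∈ Finset.range (j+1), (if i = 0 then b else 0) := by
          refine Finset.sum_le_sum ?_
          intro i hi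
          have hi' : i < q + 1 :=
            lt_of_lt_of_le (Finset.mem_range.1 hi) (Nat.succ_le_succ (Nat.lt_succ_iff.mp hj))
          have h := hω ⟨i, hi'⟩
          simp only [hcdef, Fin.val_mk] at h
          exact h
        have hite : ∑ i ∈ Finset.range (j+1), (if i = 0 then b else 0) = b := by
          rw [Finset.sum_ite_eq' (Finset.range (j+1)) 0 (fun _ => b)]
          simp
        rw [← htel]
        rw [hite] at hsumle
        exact hsumle
      simp only [Set.mem_setOf_eq]
      have hterm : ∀ i ∈ Finset.range (q+1),
          Real.exp (σ * W (((i : ℝ) + 1) * τ) ω + δ * (((i : ℝ) + 1) * τ)) ≤ ε / N := by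
        intro i hi
        have hi' : i < q + 1 := Finset.mem_range.1 hi
        have htime : ((i : ℝ) + 1) * τ = t (i+1) := by
          simp only [htdef]; push_cast; ring
        have hWle : W (((i : ℝ) + 1) * τ) ω ≤ b := by
          rw [htime]; exact hWsum i hi'
        have hdrift : δ * (((i : ℝ) + 1) * τ) ≤ 0 := by
          apply mul_nonpos_of_nonpos_of_nonneg hδ.le
          positivity
        have hexp : σ * W (((i : ℝ) + 1) * τ) ω + δ * (((i : ℝ) + 1) * τ) ≤ σ * b := by
          have := mul_le_mul_of_nonneg_left hWle hσ.le
          linarith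
        calc Real.exp (σ * W (((i : ℝ) + 1) * τ) ω + δ * (((i : ℝ) + 1) * τ))
            ≤ Real.exp (σ * b) := Real.exp_le_exp.2 hexp
          _ = ε / N := by
              rw [hbdef]
              rw [mul_div_cancel₀ _ hσ.ne']
              rw [Real.exp_sub, Real.exp_log hε, Real.exp_log hN0]
      calc ∑ i ∈ Finset.range (q+1),
          Real.exp (σ * W (((i : ℝ) + 1) * τ) ω + δ * (((i : ℝ) + 1) * τ))
          ≤ ∑ _i ∈ Finset.range (q+1), (ε / N) := Finset.sum_le_sum hterm
        _ = N * (ε / N) := by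
            rw [Finset.sum_const, Finset.card_range, nsmul_eq_mul, hNdef]; push_cast; ring
        _ = ε := by field_simp
    have hE : ℙ E = ∏ i : Fin (q+1), ℙ ((fun ω => W (t (i+1)) ω - W (t i) ω) ⁻¹' Iic (c i)) :=
      hInd.meas_iInter (fun i => ⟨Iic (c i), measurableSet_Iic, rfl⟩)
    have hprod : ℙ E = gaussianReal 0 V (Iic b) * (gaussianReal 0 V (Iic 0))^q := by
      rw [hE]
      have hfac : ∀ i : Fin (q+1),
          ℙ ((fun ω => W (t (i+1)) ω - W (t i) ω) ⁻¹' Iic (c i))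
            = gaussianReal 0 V (Iic (c i)) := fun i => hprob i (c i)
      rw [Finset.prod_congr rfl (fun i _ => hfac i)]
      rw [Fin.prod_univ_succ]
      have hc0 : c 0 = b := by simp [hcdef]
      have hcs : ∀ i : Fin q, c i.succ = 0 := by
        intro i
        simp [hcdef, Fin.val_succ]
      rw [hc0, Finset.prod_congr rfl (fun i _ => by rw [hcs i]),
        Finset.prod_const, Finset.card_univ, Fintype.card_fin]
    have hmono := measure_mono (μ := (ℙ : Measure Ω)) hEsub
    have htoReal : (ℙ E).toReal ≤ (ℙ {ω | ∑ i ∈ Finset.range (q+1),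
        Real.exp (σ * W (((i : ℝ) + 1) * τ) ω + δ * (((i : ℝ) + 1) * τ)) ≤ ε}).toReal :=
      ENNReal.toReal_mono (measure_ne_top _ _) hmono
    refine le_trans ?_ htoReal
    rw [hprod, ENNReal.toReal_mul, ENNReal.toReal_pow]
    have hg1 := gauss_lower hVpos hb
    have hg2 := gauss_lower hVpos (le_refl (0:ℝ))
    rw [hVc] at hg1 hg2
    have hgoal : K₁ * Real.exp (-(b - 1)^2 / (2*τ))
        = (C * Real.exp (-(b-1)^2 / (2 * τ))) * L0 ^ q := by
      rw [hK₁]; ring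
    rw [hgoal]
    have h2 : L0 ^ q ≤ ((gaussianReal 0 V) (Iic 0)).toReal ^ q := by
      apply pow_le_pow_left₀ hL0pos.le
      rw [hL0]
      exact hg2
    refine mul_le_mul hg1 h2 (by positivity) ENNReal.toReal_nonneg
  -- upper bound on the probability
  have hup : ∀ ε : ℝ, 0 < ε → (Real.log ε - δ*τ)/σ < 0 →
      (ℙ {ω | ∑ i ∈ Finset.range (q+1),
          Real.exp (σ * W (((i : ℝ) + 1) * τ) ω
            + δ * (((i : ℝ) + 1) * τ)) ≤ ε}).toReal
        ≤ C * (τ / (-((Real.log ε - δ*τ)/σ)))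
            * Real.exp (-((Real.log ε - δ*τ)/σ)^2 / (2*τ)) := by
    intro ε hε hu
    set u : ℝ := (Real.log ε - δ*τ)/σ with hudef
    have hsub : {ω | ∑ i ∈ Finset.range (q+1),
        Real.exp (σ * W (((i : ℝ) + 1) * τ) ω + δ * (((i : ℝ) + 1) * τ)) ≤ ε}
        ⊆ inc 0 ⁻¹' Iic u := by
      intro ω hω
      simp only [Set.mem_setOf_eq] at hω
      have h0mem : (0:ℕ) ∈ Finset.range (q+1) := Finset.mem_range.2 (Nat.succ_pos q)
      have hterm : Real.exp (σ * W (((0 : ℝ) + 1) * τ) ω + δ * (((0 : ℝ) + 1) * τ)) ≤ ε := by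
        have := Finset.single_le_sum
          (f := fun i : ℕ => Real.exp (σ * W (((i : ℝ) + 1) * τ) ω + δ * (((i : ℝ) + 1) * τ)))
          (fun i _ => (Real.exp_pos _).le) h0mem
        simp only [Nat.cast_zero] at this
        exact le_trans this hω
      have hlog : σ * W (((0 : ℝ) + 1) * τ) ω + δ * (((0 : ℝ) + 1) * τ) ≤ Real.log ε :=
        (Real.le_log_iff_exp_le hε).mpr hterm
      have htime : ((0 : ℝ) + 1) * τ = t 1 := by simp [htdef]
      rw [htime] at hlog
      have ht1 : t 1 = τ := by simp [htdef]
      simp only [Set.mem_preimage, Set.mem_Iic, hincdef]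
      rw [ht0, hW0 ω, sub_zero]
      have ht01 : t (0+1) = τ := by simp [htdef]
      rw [ht01, hudef, le_div_iff₀ hσ]
      rw [ht1] at hlog
      linarith
    have hmono := measure_mono (μ := (ℙ : Measure Ω)) hsub
    have h1 : (ℙ {ω | ∑ i ∈ Finset.range (q+1),
        Real.exp (σ * W (((i : ℝ) + 1) * τ) ω + δ * (((i : ℝ) + 1) * τ)) ≤ ε}).toReal
        ≤ (ℙ (inc 0 ⁻¹' Iic u)).toReal :=
      ENNReal.toReal_mono (measure_ne_top _ _) hmono
    refine h1.trans ?_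
    rw [hprob 0 u]
    have hg := gauss_upper hVpos hu
    rw [hVc] at hg
    exact hg
  -- squeeze
  set c0 : ℝ := 1/(2*σ^2*τ) with hc0def
  have hc0pos : 0 < c0 := by positivity
  set k₁ : ℝ := -(Real.log N + σ) with hk1
  set k₂ : ℝ := -(δ*τ) with hk2
  have hlo_t : Tendsto (fun ε : ℝ =>
      (Real.log K₁ - (Real.log ε + k₁)^2 * c0) / (Real.log ε)^2)
      (nhdsWithin 0 (Set.Ioi 0)) (nhds (-c0)) :=
    (tendsto_aux c0 k₁ (Real.log K₁)).comp Real.tendsto_log_nhdsGT_zero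
  have hhi_t : Tendsto (fun ε : ℝ =>
      (Real.log K₂ - (Real.log ε + k₂)^2 * c0) / (Real.log ε)^2)
      (nhdsWithin 0 (Set.Ioi 0)) (nhds (-c0)) :=
    (tendsto_aux c0 k₂ (Real.log K₂)).comp Real.tendsto_log_nhdsGT_zero
  have htarget : -c0 = -1/(2*σ^2*τ) := by rw [hc0def]; ring
  rw [← htarget]
  have hev : ∀ᶠ ε in nhdsWithin (0:ℝ) (Set.Ioi 0), Real.log ε ≤ min (-1) (δ*τ - σ) :=
    Real.tendsto_log_nhdsGT_zero.eventually (eventually_le_atBot _)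
  have hevpos : ∀ᶠ ε in nhdsWithin (0:ℝ) (Set.Ioi 0), (0:ℝ) < ε :=
    eventually_nhdsWithin_of_forall fun x hx => hx
  have hle1 : ∀ᶠ ε in nhdsWithin (0:ℝ) (Set.Ioi 0),
      (Real.log K₁ - (Real.log ε + k₁)^2 * c0) / (Real.log ε)^2 ≤
      Real.log (ℙ {ω | ∑ i ∈ Finset.range (q+1),
          Real.exp (σ * W (((i : ℝ) + 1) * τ) ω
            + δ * (((i : ℝ) + 1) * τ)) ≤ ε}).toReal / (Real.log ε) ^ 2 := by
    filter_upwards [hev, hevpos] with ε hlogm hε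
    have hlog1 : Real.log ε ≤ -1 := hlogm.trans (min_le_left _ _)
    have hlogN : 0 ≤ Real.log N := Real.log_nonneg hN1
    have hb : (Real.log ε - Real.log N)/σ ≤ 0 :=
      div_nonpos_of_nonpos_of_nonneg (by linarith) hσ.le
    have hP := hlow ε hε hb
    have hLBpos : (0:ℝ) < K₁ * Real.exp (-(((Real.log ε - Real.log N)/σ) - 1)^2 / (2*τ)) := by
      positivity
    have hPpos : (0:ℝ) < (ℙ {ω | ∑ i ∈ Finset.range (q+1),
        Real.exp (σ * W (((i : ℝ) + 1) * τ) ω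
          + δ * (((i : ℝ) + 1) * τ)) ≤ ε}).toReal := lt_of_lt_of_le hLBpos hP
    have hsq : (0:ℝ) < (Real.log ε)^2 := by nlinarith
    have hnum : Real.log (K₁ * Real.exp (-(((Real.log ε - Real.log N)/σ) - 1)^2 / (2*τ)))
        = Real.log K₁ - (Real.log ε + k₁)^2 * c0 := by
      rw [Real.log_mul hK₁pos.ne' (Real.exp_ne_zero _), Real.log_exp, hk1, hc0def]
      field_simp
      ring
    rw [← hnum]
    have hll := Real.log_le_log hLBpos hP
    gcongr
  have hle2 : ∀ᶠ ε in nhdsWithin (0:ℝ) (Set.Ioi 0),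
      Real.log (ℙ {ω | ∑ i ∈ Finset.range (q+1),
          Real.exp (σ * W (((i : ℝ) + 1) * τ) ω
            + δ * (((i : ℝ) + 1) * τ)) ≤ ε}).toReal / (Real.log ε) ^ 2 ≤
      (Real.log K₂ - (Real.log ε + k₂)^2 * c0) / (Real.log ε)^2 := by
    filter_upwards [hev, hevpos] with ε hlogm hε
    have hlog1 : Real.log ε ≤ -1 := hlogm.trans (min_le_left _ _)
    have hlog2 : Real.log ε ≤ δ*τ - σ := hlogm.trans (min_le_right _ _)
    have hlogN : 0 ≤ Real.log N := Real.log_nonneg hN1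
    have hu1 : (Real.log ε - δ*τ)/σ ≤ -1 := by
      rw [div_le_iff₀ hσ]; linarith
    have hu0 : (Real.log ε - δ*τ)/σ < 0 := lt_of_le_of_lt hu1 (by norm_num)
    have hb : (Real.log ε - Real.log N)/σ ≤ 0 :=
      div_nonpos_of_nonpos_of_nonneg (by linarith) hσ.le
    have hP := hlow ε hε hb
    have hLBpos : (0:ℝ) < K₁ * Real.exp (-(((Real.log ε - Real.log N)/σ) - 1)^2 / (2*τ)) := by
      positivity
    have hPpos : (0:ℝ) < (ℙ {ω | ∑ i ∈ Finset.range (q+1),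
        Real.exp (σ * W (((i : ℝ) + 1) * τ) ω
          + δ * (((i : ℝ) + 1) * τ)) ≤ ε}).toReal := lt_of_lt_of_le hLBpos hP
    have hsq : (0:ℝ) < (Real.log ε)^2 := by nlinarith
    have hP2 := hup ε hε hu0
    have hstep : C * (τ / (-((Real.log ε - δ*τ)/σ)))
          * Real.exp (-((Real.log ε - δ*τ)/σ)^2 / (2*τ))
        ≤ K₂ * Real.exp (-((Real.log ε - δ*τ)/σ)^2 / (2*τ)) := by
      refine mul_le_mul_of_nonneg_right ?_ (Real.exp_nonneg _)
      rw [hK₂]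
      refine mul_le_mul_of_nonneg_left ?_ hCpos.le
      exact div_le_self hτ.le (by linarith)
    have hnum : Real.log (K₂ * Real.exp (-((Real.log ε - δ*τ)/σ)^2 / (2*τ)))
        = Real.log K₂ - (Real.log ε + k₂)^2 * c0 := by
      rw [Real.log_mul hK₂pos.ne' (Real.exp_ne_zero _), Real.log_exp, hk2, hc0def]
      field_simp
      ring
    rw [← hnum]
    have hll := Real.log_le_log hPpos (hP2.trans hstep)
    gcongr
  exact tendsto_of_tendsto_of_tendsto_of_le_of_le' hlo_t hhi_t hle1 hle2
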